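/- Let G be the finite input graph of the Cumulative NDFS algorithm, v a parameter valuation, and q a state of G that does not appear on any cycle under v. Then the OuterDFS procedure backtracks from q only after every state s reachable from q with v ∈ s.⟦C⟧ either has already been backtracked from by OuterDFS or satisfies s.⟦C⟧ ⊆ Found at that moment. -/

import Mathlib

namespace PTASynth

open Relation

variable {L P : Type} {n : ℕ} [Fintype P]

/-! ### Affine expressions over parameters -/

/-- Affine expressions `z₀ + z₁p₁ + … + zₘpₘ` with integer coefficients. -/
structure AffExpr (P : Type) where
  const : ℤ
  coef : P → ℤ

noncomputable def AffExpr.eval (e : AffExpr P) (v : P → ℤ) : ℤ :=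
  e.const + ∑ p, e.coef p * v p

instance : Add (AffExpr P) :=
  ⟨fun e f => ⟨e.const + f.const, fun p => e.coef p + f.coef p⟩⟩

def AffExpr.ofInt (z : ℤ) : AffExpr P := ⟨z, fun _ => 0⟩

open Classical in
noncomputable def AffExpr.var (p : P) : AffExpr P :=
  ⟨0, fun q => if q = p then 1 else 0⟩

/-- `max_{lb,ub}(e)`: replace positively occurring parameters by their upper bound and
negatively occurring ones by their lower bound. -/
noncomputable def AffExpr.maxVal (e : AffExpr P) (lb ub : P → ℤ) : ℤ :=
  e.const + ∑ p, (if 0 ≤ e.coef p then e.coef p * ub p else e.coef p * lb p)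

/-- Extended affine expressions: `none` denotes `∞`. -/
abbrev EExpr (P : Type) := Option (AffExpr P)

noncomputable def EExpr.eval (e : EExpr P) (v : P → ℤ) : WithTop ℤ :=
  match e with
  | none => ⊤
  | some e => (AffExpr.eval e v : WithTop ℤ)

def EExpr.add : EExpr P → EExpr P → EExpr P
  | some e, some f => some (e + f)
  | _, _ => none

/-! ### Parameter constraints -/

/-- Relation symbols for parameter constraints. -/
inductive CRel | lt | le | ge | gt
deriving DecidableEq

def CRel.holds : CRel → WithTop ℤ → WithTop ℤ → Prop
  | .lt, a, b => a < b
  | .le, a, b => a ≤ b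
  | .ge, a, b => b ≤ a
  | .gt, a, b => b < a

def CRel.negRel : CRel → CRel
  | .lt => .ge
  | .le => .gt
  | .ge => .lt
  | .gt => .le

/-- A parameter constraint `e ∼ e'`. -/
structure Constr (P : Type) where
  lhs : EExpr P
  rel : CRel
  rhs : EExpr P

def Constr.neg (c : Constr P) : Constr P := ⟨c.lhs, c.rel.negRel, c.rhs⟩

def Constr.sat (c : Constr P) (v : P → ℤ) : Prop :=
  c.rel.holds (EExpr.eval c.lhs v) (EExpr.eval c.rhs v)

/-- `⟦C⟧`: the set of parameter valuations satisfying a constraint set. -/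
def csem (C : Set (Constr P)) : Set (P → ℤ) :=
  {v | ∀ c ∈ C, c.sat v}

/-- `C ⊨ c`: the constraint `c` covers the constraint set `C`. -/
def Covers (C : Set (Constr P)) (c : Constr P) : Prop :=
  ∀ v ∈ csem C, c.sat v

/-! ### Clock valuations -/

/-- Clock valuations over clocks `Fin (n+1)`, clock `0` is the zero clock `x₀`. -/
structure ClockVal (n : ℕ) where
  val : Fin (n + 1) → ℝ
  zero_eq : val 0 = 0
  nonneg : ∀ x, 0 ≤ val x

def ClockVal.zeroVal (n : ℕ) : ClockVal n := ⟨fun _ => 0, rfl, fun _ => le_refl 0⟩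

open Classical in
/-- `η⟨R⟩`: reset the clocks in `R` to `0`. -/
noncomputable def ClockVal.reset (η : ClockVal n) (R : Set (Fin (n + 1))) : ClockVal n where
  val x := if x = 0 ∨ x ∈ R then 0 else η.val x
  zero_eq := by simp
  nonneg x := by
    show 0 ≤ (if x = 0 ∨ x ∈ R then 0 else η.val x)
    split
    · exact le_rfl
    · exact η.nonneg x

/-! ### Guards -/

/-- A bound `(≺, e)` with `≺ ∈ {≤, <}` (`true` means `≤`) and `e ∈ E(P) ∪ {∞}`. -/
abbrev Bnd (P : Type) := Bool × EExpr P

def Bnd.sat (b : Bnd P) (v : P → ℤ) (r : ℝ) : Prop :=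
  match b.2 with
  | none => True
  | some e => if b.1 then r ≤ (AffExpr.eval e v : ℝ) else r < (AffExpr.eval e v : ℝ)

/-- An atomic guard `xᵢ - xⱼ ≺ e`. -/
structure Atom (n : ℕ) (P : Type) where
  i : Fin (n + 1)
  j : Fin (n + 1)
  le : Bool
  e : EExpr P

/-- A guard is a finite conjunction of atomic guards. -/
abbrev Guard (n : ℕ) (P : Type) := List (Atom n P)

def Atom.sat (a : Atom n P) (v : P → ℤ) (η : ClockVal n) : Prop :=
  Bnd.sat (a.le, a.e) v (η.val a.i - η.val a.j)

def Guard.sat (g : Guard n P) (v : P → ℤ) (η : ClockVal n) : Prop :=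
  ∀ a ∈ g, a.sat v η

/-- Simple guards: one of the compared clocks is the zero clock and the bound is finite. -/
def Atom.Simple (a : Atom n P) : Prop := (a.i = 0 ∨ a.j = 0) ∧ a.e ≠ none

def Guard.Simple (g : Guard n P) : Prop := ∀ a ∈ g, a.Simple

/-! ### Parametric timed (Büchi) automata -/

/-- A parametric timed automaton. -/
structure PTA (L : Type) (n : ℕ) (P : Type) where
  l0 : L
  trans : Set (L × Guard n P × Set (Fin (n + 1)) × L)
  Inv : L → Guard n P
  simple_trans : ∀ t ∈ trans, Guard.Simple t.2.1
  simple_Inv : ∀ l, Guard.Simple (Inv l)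

/-- A parametric timed Büchi automaton. -/
structure PTBA (L : Type) (n : ℕ) (P : Type) extends PTA L n P where
  F : Set L

/-! ### Concrete semantics `⟦A⟧_v` -/

abbrev CState (L : Type) (n : ℕ) := L × ClockVal n

/-- Delay transition `(l,η) →^d (l,η+d)`. -/
def DelayStep (M : PTA L n P) (v : P → ℤ) (s : CState L n) (d : ℝ) (s' : CState L n) : Prop :=
  s'.1 = s.1 ∧ 0 ≤ d ∧ (∀ x : Fin (n + 1), x ≠ 0 → s'.2.val x = s.2.val x + d) ∧
    Guard.sat (M.Inv s'.1) v s'.2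

/-- Action transition `(l,η) →^act (l',η⟨R⟩)`. -/
def ActStep (M : PTA L n P) (v : P → ℤ) (s s' : CState L n) : Prop :=
  ∃ g R, (s.1, g, R, s'.1) ∈ M.trans ∧ Guard.sat g v s.2 ∧
    s'.2 = s.2.reset R ∧ Guard.sat (M.Inv s'.1) v s'.2

/-- `s →^{act}_d s'`: an action transition followed by a delay transition. -/
def ActD (M : PTA L n P) (v : P → ℤ) (s s' : CState L n) : Prop :=
  ∃ s'' d, ActStep M v s s'' ∧ DelayStep M v s'' d s'

/-- `s →^{act₁,…,act_k}_d s'`: composition of `→^{act}_d` steps where each step is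
labelled by the location of its source state. -/
def ActDSeq (M : PTA L n P) (v : P → ℤ) : List L → CState L n → CState L n → Prop
  | [], s, s' => s = s'
  | l :: ls, s, s' => ∃ s'', s.1 = l ∧ ActD M v s s'' ∧ ActDSeq M v ls s'' s'

/-- `s (→^{act₁,…,act_k}_d)* s'`: one or more iterations of `→^{act₁,…,act_k}_d`. -/
def ActDSeqPlus (M : PTA L n P) (v : P → ℤ) (acts : List L) :
    CState L n → CState L n → Prop :=
  TransGen (ActDSeq M v acts)

/-! ### Time-abstracting simulations -/

def IsTASim (M : PTA L n P) (v : P → ℤ) (R : CState L n → CState L n → Prop) : Prop :=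
  (∀ s1 s2 s1', R s1 s2 → ActStep M v s1 s1' →
      ∃ s2', ActStep M v s2 s2' ∧ R s1' s2') ∧
  (∀ s1 s2 s1' (d1 : ℝ), R s1 s2 → DelayStep M v s1 d1 s1' →
      ∃ d2 s2', DelayStep M v s2 d2 s2' ∧ R s1' s2')

def IsTABisim (M : PTA L n P) (v : P → ℤ) (R : CState L n → CState L n → Prop) : Prop :=
  IsTASim M v R ∧ IsTASim M v (flip R)

/-- `s ≼ s'`: some time-abstracting simulation relates `s` to `s'`. -/
def Sim (M : PTA L n P) (v : P → ℤ) (s s' : CState L n) : Prop :=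
  ∃ R, IsTASim M v R ∧ R s s'

/-! ### Runs of `⟦A⟧_v` -/

/-- A proper run: an infinite alternating sequence of delay and action transitions,
beginning with a delay, starting in the initial state. -/
def ProperRun (A : PTBA L n P) (v : P → ℤ) (s : ℕ → CState L n) (d : ℕ → ℝ) : Prop :=
  s 0 = (A.l0, ClockVal.zeroVal n) ∧
  ∀ i, ∃ s', DelayStep A.toPTA v (s i) (d i) s' ∧ ActStep A.toPTA v s' (s (i + 1))

def AcceptingRun (A : PTBA L n P) (v : P → ℤ) (s : ℕ → CState L n) (d : ℕ → ℝ) : Prop :=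
  ProperRun A v s d ∧ ∀ N, ∃ i, N ≤ i ∧ (s i).1 ∈ A.F

/-- A run is Zeno if the sum of all its delays is finite (bounded). -/
def ZenoD (d : ℕ → ℝ) : Prop := ∃ B : ℝ, ∀ N, ∑ i ∈ Finset.range N, d i ≤ B

def HasAccRun (A : PTBA L n P) (v : P → ℤ) : Prop := ∃ s d, AcceptingRun A v s d

/-- The PTBA has no Zeno accepting runs. -/
def NoZeno (A : PTBA L n P) : Prop :=
  ∀ (v : P → ℤ) s d, AcceptingRun A v s d → ¬ ZenoD d

/-! ### (Constrained) parametric difference bound matrices -/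

/-- A parametric difference bound matrix. -/
abbrev PDBM (n : ℕ) (P : Type) := Fin (n + 1) → Fin (n + 1) → Bnd P

/-- `⟦D⟧_v`. -/
def PDBM.sem (D : PDBM n P) (v : P → ℤ) : Set (ClockVal n) :=
  {η | ∀ i j, Bnd.sat (D i j) v (η.val i - η.val j)}

/-- A constrained PDBM `(C, D)`. -/
abbrev CPDBM (n : ℕ) (P : Type) := Set (Constr P) × PDBM n P

/-- `⟦C,D⟧ = {(v,η) | v ∈ ⟦C⟧ ∧ η ∈ ⟦D⟧_v}`. -/
def CPDBM.sem (cd : CPDBM n P) : Set ((P → ℤ) × ClockVal n) :=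
  {p | p.1 ∈ csem cd.1 ∧ p.2 ∈ PDBM.sem cd.2 p.1}

open Classical in
noncomputable def PDBM.upd (D : PDBM n P) (i j : Fin (n + 1)) (b : Bnd P) : PDBM n P :=
  fun i' j' => if i' = i ∧ j' = j then b else D i' j'

/-- The constraint `e_ij (≺_ij ⟹ ≺) e` used when applying the guard atom
`x_i - x_j ≺ e` to a PDBM. -/
def atomConstr (D : PDBM n P) (a : Atom n P) : Constr P :=
  ⟨(D a.i a.j).2, if !(D a.i a.j).1 || a.le then CRel.le else CRel.lt, a.e⟩

/-- Applying a guard atom to a constrained PDBM (possibly splitting the constraint set). -/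
inductive ApplyAtom : CPDBM n P → Atom n P → CPDBM n P → Prop
  | keep (C : Set (Constr P)) (D : PDBM n P) (a : Atom n P) :
      Covers C (atomConstr D a) → ApplyAtom (C, D) a (C, D)
  | repl (C : Set (Constr P)) (D : PDBM n P) (a : Atom n P) :
      Covers C (atomConstr D a).neg →
      ApplyAtom (C, D) a (C, PDBM.upd D a.i a.j (a.le, a.e))
  | splitKeep (C : Set (Constr P)) (D : PDBM n P) (a : Atom n P) :
      ¬ Covers C (atomConstr D a) → ¬ Covers C (atomConstr D a).neg →
      ApplyAtom (C, D) a (insert (atomConstr D a) C, D)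
  | splitRepl (C : Set (Constr P)) (D : PDBM n P) (a : Atom n P) :
      ¬ Covers C (atomConstr D a) → ¬ Covers C (atomConstr D a).neg →
      ApplyAtom (C, D) a (insert (atomConstr D a).neg C, PDBM.upd D a.i a.j (a.le, a.e))

/-- Applying a conjunction of guard atoms. -/
inductive ApplyGuard : CPDBM n P → Guard n P → CPDBM n P → Prop
  | nil (cd : CPDBM n P) : ApplyGuard cd [] cd
  | cons {cd cd' cd'' : CPDBM n P} {a : Atom n P} {g : Guard n P} :
      ApplyAtom cd a cd' → ApplyGuard cd' g cd'' → ApplyGuard cd (a :: g) cd''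

open Classical in
/-- `D⟨R⟩`: resetting a set of clocks. -/
noncomputable def PDBM.reset (D : PDBM n P) (R : Set (Fin (n + 1))) : PDBM n P :=
  fun i j =>
    if i = j then D i j
    else D (if i ∈ R then 0 else i) (if j ∈ R then 0 else j)

open Classical in
/-- `D↑`: the time successor (remove all upper bounds on clocks). -/
noncomputable def PDBM.up (D : PDBM n P) : PDBM n P :=
  fun i j => if i ≠ 0 ∧ j = 0 then ((false : Bool), (none : EExpr P)) else D i j

/-- The guard atom `x_i - x_j (≺_ik ∧ ≺_kj) (e_ik + e_kj)` used by the parametric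
Floyd–Warshall canonisation. -/
def fwAtom (D : PDBM n P) (k i j : Fin (n + 1)) : Atom n P :=
  ⟨i, j, (D i k).1 && (D k j).1, EExpr.add (D i k).2 (D k j).2⟩

/-- One step of the nondeterministic parametric Floyd–Warshall algorithm. -/
inductive FWStep : ℕ × ℕ × ℕ × CPDBM n P → ℕ × ℕ × ℕ × CPDBM n P → Prop
  | relax (k i j : Fin (n + 1)) (cd cd' : CPDBM n P) :
      ApplyAtom cd (fwAtom cd.2 k i j) cd' →
      FWStep ((k : ℕ), (i : ℕ), (j : ℕ), cd) ((k : ℕ), (i : ℕ), (j : ℕ) + 1, cd')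
  | nextI (k i : Fin (n + 1)) (cd : CPDBM n P) :
      FWStep ((k : ℕ), (i : ℕ), n + 1, cd) ((k : ℕ), (i : ℕ) + 1, 0, cd)
  | nextK (k : Fin (n + 1)) (cd : CPDBM n P) :
      FWStep ((k : ℕ), n + 1, 0, cd) ((k : ℕ) + 1, 0, 0, cd)

/-- `(C',D') ∈ (C,D)_c`: membership in the canonical set. -/
def Canon (cd cd' : CPDBM n P) : Prop :=
  ReflTransGen FWStep (0, 0, 0, cd) (n + 1, 0, 0, cd')

/-! ### Symbolic semantics `⟦A⟧` -/

abbrev SymState (L : Type) (n : ℕ) (P : Type) := L × CPDBM n P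

/-- The symbolic transition relation `⟹` of `⟦A⟧`. -/
def SymStep (A : PTBA L n P) (S S' : SymState L n P) : Prop :=
  ∃ g R, (S.1, g, R, S'.1) ∈ A.trans ∧
    ∃ cd1 cd2 cd3, ApplyGuard S.2 g cd1 ∧ Canon cd1 cd2 ∧
      ApplyGuard (cd2.1, PDBM.up (PDBM.reset cd2.2 R)) (A.Inv S'.1) cd3 ∧ Canon cd3 S'.2

/-- The constraints `lb(p) ≤ p ≤ ub(p)` for all parameters `p`. -/
noncomputable def boundC (lb ub : P → ℤ) : Set (Constr P) :=
  {c | ∃ p : P, c = ⟨some (AffExpr.var p), CRel.ge, some (AffExpr.ofInt (lb p))⟩ ∨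
                c = ⟨some (AffExpr.var p), CRel.le, some (AffExpr.ofInt (ub p))⟩}

/-- The PDBM with all entries `(0, ≤)`. -/
def E0 (n : ℕ) (P : Type) : PDBM n P := fun _ _ => ((true : Bool), some (AffExpr.ofInt 0))

/-- The initial symbolic states of `⟦A⟧`. -/
def SymInit (A : PTBA L n P) (lb ub : P → ℤ) : Set (SymState L n P) :=
  {S | S.1 = A.l0 ∧ ApplyGuard (boundC lb ub, PDBM.up (E0 n P)) (A.Inv A.l0) S.2}

/-- The (reachable) symbolic states of `⟦A⟧`. -/
def SymStates (A : PTBA L n P) (lb ub : P → ℤ) : Set (SymState L n P) :=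
  {S | ∃ S0 ∈ SymInit A lb ub, ReflTransGen (SymStep A) S0 S}

/-- `s ∈_v S`: the concrete state `s` is contained in the symbolic state `S` under `v`. -/
def InV (v : P → ℤ) (s : CState L n) (S : SymState L n P) : Prop :=
  s.1 = S.1 ∧ v ∈ csem S.2.1 ∧ s.2 ∈ PDBM.sem S.2.2 v

/-! ### Abstractions -/

abbrev Abstr (L : Type) (n : ℕ) (P : Type) := SymState L n P → Set (SymState L n P)

/-- `α` is an abstraction over `⟦A⟧`. -/
def IsAbstraction (A : PTBA L n P) (α : Abstr L n P) : Prop :=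
  (∀ S Q, Q ∈ α S → Q.1 = S.1 ∧ csem Q.2.1 ⊆ csem S.2.1 ∧
      CPDBM.sem (Q.2.1, S.2.2) ⊆ CPDBM.sem Q.2) ∧
  (∀ S Q, Q ∈ α S → ∀ (v : P → ℤ) (s : CState L n), InV v s Q →
      ∃ s', InV v s' S ∧ Sim A.toPTA v s s')

/-- The transition relation `⟹^α` of the induced transition system `⟦A⟧^α`. -/
def AbsStep (A : PTBA L n P) (α : Abstr L n P) (Q Q' : SymState L n P) : Prop :=
  ∃ S, SymStep A Q S ∧ Q' ∈ α S

/-- The initial states of `⟦A⟧^α`. -/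
def AbsInit (A : PTBA L n P) (lb ub : P → ℤ) (α : Abstr L n P) : Set (SymState L n P) :=
  {Q | ∃ S ∈ SymInit A lb ub, Q ∈ α S}

/-- The states of `⟦A⟧^α`. -/
def AbsStates (A : PTBA L n P) (lb ub : P → ℤ) (α : Abstr L n P) : Set (SymState L n P) :=
  {Q | ∃ Q0 ∈ AbsInit A lb ub α, ReflTransGen (AbsStep A α) Q0 Q}

/-- The semantic content `(l, ⟦C⟧, ⟦C,D⟧)` of a symbolic state. -/
def semClass (Q : SymState L n P) : L × Set (P → ℤ) × Set ((P → ℤ) × ClockVal n) :=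
  (Q.1, csem Q.2.1, CPDBM.sem Q.2)

/-- `α` is a finite abstraction: the induced state space is finite (up to semantics). -/
def FiniteAbs (A : PTBA L n P) (lb ub : P → ℤ) (α : Abstr L n P) : Prop :=
  (semClass '' AbsStates A lb ub α).Finite

/-- There is an accepting run of `⟦A⟧^α` respecting `v`. -/
def AbsAccRun (A : PTBA L n P) (lb ub : P → ℤ) (α : Abstr L n P) (v : P → ℤ) : Prop :=
  ∃ ρ : ℕ → SymState L n P, ρ 0 ∈ AbsInit A lb ub α ∧
    (∀ i, AbsStep A α (ρ i) (ρ (i + 1))) ∧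
    (∀ i, v ∈ csem (ρ i).2.1) ∧
    (∀ N, ∃ i, N ≤ i ∧ (ρ i).1 ∈ A.F)

/-- `Q ⟹^α … ⟹^α Q'` via transitions labelled by the locations of their source states. -/
def AbsSeq (A : PTBA L n P) (α : Abstr L n P) :
    List L → SymState L n P → SymState L n P → Prop
  | [], Q, Q' => Q = Q'
  | l :: ls, Q, Q'' => ∃ Q', Q.1 = l ∧ AbsStep A α Q Q' ∧ AbsSeq A α ls Q' Q''

/-! ### The pk-extrapolation -/

def guardsOf (A : PTBA L n P) : Set (Guard n P) :=
  {g | (∃ t ∈ A.trans, t.2.1 = g) ∨ (∃ l, A.Inv l = g)}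

/-- The affine expressions compared with the clock `x` in a guard or invariant of `A`. -/
def comparedWith (A : PTBA L n P) (x : Fin (n + 1)) : Set (AffExpr P) :=
  {e | ∃ g ∈ guardsOf A, ∃ a ∈ g, (a.i = x ∨ a.j = x) ∧ a.e = some e}

/-- `M(x)`: the maximal constant with which the clock `x` is compared. -/
noncomputable def Mmax (A : PTBA L n P) (lb ub : P → ℤ) (x : Fin (n + 1)) : ℤ :=
  sSup ((fun e => AffExpr.maxVal e lb ub) '' comparedWith A x)

/-- The four possible ways the pk-extrapolation treats the entry `(i,j)` with maximal
constants `Mi = M(x_i)` and `Mj = M(x_j)`. -/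
def PkEntry (Mi Mj : ℤ) (old new : Bnd P) (c : Constr P) : Prop :=
  (new = old ∧ c = ⟨old.2, CRel.le, some (AffExpr.ofInt Mi)⟩) ∨
  (new = ((false : Bool), (none : EExpr P)) ∧ c = ⟨old.2, CRel.gt, some (AffExpr.ofInt Mi)⟩) ∨
  (new = old ∧ c = ⟨old.2, CRel.ge, some (AffExpr.ofInt (-Mj))⟩) ∨
  (new = ((false : Bool), some (AffExpr.ofInt (-Mj))) ∧
    c = ⟨old.2, CRel.lt, some (AffExpr.ofInt (-Mj))⟩)

/-- The pk-extrapolation `α_pk`. -/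
noncomputable def pkExtra (A : PTBA L n P) (lb ub : P → ℤ) : Abstr L n P :=
  fun S => {Q | Q.1 = S.1 ∧
    ∃ f : Fin (n + 1) → Fin (n + 1) → Bnd P × Constr P,
      (∀ i j, PkEntry (Mmax A lb ub i) (Mmax A lb ub j) (S.2.2 i j) (f i j).1 (f i j).2) ∧
      (∀ i j, Q.2.2 i j = (f i j).1) ∧
      Q.2.1 = S.2.1 ∪ {c | ∃ i j, c = (f i j).2}}

/-! ### Region equivalence -/

/-- The maximal constant to which the clock `x` is compared in `A|v`. -/
noncomputable def cmax (A : PTBA L n P) (v : P → ℤ) (x : Fin (n + 1)) : ℤ :=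
  sSup ((fun e => AffExpr.eval e v) '' comparedWith A x)

/-- The standard region equivalence `≡_{A|v}` on the states of `⟦A⟧_v`. -/
def RegionEquiv (A : PTBA L n P) (v : P → ℤ) (s s' : CState L n) : Prop :=
  s.1 = s'.1 ∧
  (∀ x : Fin (n + 1),
      ((cmax A v x : ℝ) < s.2.val x ∧ (cmax A v x : ℝ) < s'.2.val x) ∨
      (⌊s.2.val x⌋ = ⌊s'.2.val x⌋ ∧ (Int.fract (s.2.val x) = 0 ↔ Int.fract (s'.2.val x) = 0))) ∧
  (∀ x y : Fin (n + 1),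
      s.2.val x ≤ (cmax A v x : ℝ) → s.2.val y ≤ (cmax A v y : ℝ) →
      (Int.fract (s.2.val x) ≤ Int.fract (s.2.val y) ↔
        Int.fract (s'.2.val x) ≤ Int.fract (s'.2.val y)))

/-! ### The Cumulative NDFS algorithm -/

variable {S V : Type}

/-- A finite Büchi graph whose states carry monotone sets of parameter valuations. -/
structure NGraph (S V : Type) where
  succ : S → List S
  init : S
  acc : S → Prop
  C : S → Set V
  mono : ∀ s s', s' ∈ succ s → C s' ⊆ C s

/-- Control frames of the Cumulative NDFS machine. -/
inductive NFrame (S : Type)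
  | callOuter (s : S)
  | outer (s : S) (rest : List S)
  | outerPop (s : S)
  | callInner (s : S)
  | inner (s : S) (rest : List S)

/-- Configurations of the Cumulative NDFS machine. -/
structure NConfig (S V : Type) where
  found : Set V
  outer : Set S
  inner : Set S
  stack : Set S
  ctrl : List (NFrame S)

/-- Small-step semantics of the Cumulative NDFS algorithm. -/
inductive NStep (G : NGraph S V) : NConfig S V → NConfig S V → Prop
  | callOuter (F O I St s k) :
      NStep G ⟨F, O, I, St, .callOuter s :: k⟩
              ⟨F, insert s O, I, insert s St, .outer s (G.succ s) :: k⟩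
  | outerSkip (F O I St s s' rest k) :
      (s' ∈ O ∨ s' ∈ St ∨ G.C s' ⊆ F) →
      NStep G ⟨F, O, I, St, .outer s (s' :: rest) :: k⟩
              ⟨F, O, I, St, .outer s rest :: k⟩
  | outerRec (F O I St s s' rest k) :
      s' ∉ O → s' ∉ St → ¬ G.C s' ⊆ F →
      NStep G ⟨F, O, I, St, .outer s (s' :: rest) :: k⟩
              ⟨F, O, I, St, .callOuter s' :: .outer s rest :: k⟩
  | outerAcc (F O I St s k) :
      G.acc s → ¬ G.C s ⊆ F →
      NStep G ⟨F, O, I, St, .outer s [] :: k⟩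
              ⟨F, O, I, St, .callInner s :: .outerPop s :: k⟩
  | outerDone (F O I St s k) :
      ¬ (G.acc s ∧ ¬ G.C s ⊆ F) →
      NStep G ⟨F, O, I, St, .outer s [] :: k⟩ ⟨F, O, I, St \ {s}, k⟩
  | outerPop (F O I St s k) :
      NStep G ⟨F, O, I, St, .outerPop s :: k⟩ ⟨F, O, I, St \ {s}, k⟩
  | callInner (F O I St s k) :
      NStep G ⟨F, O, I, St, .callInner s :: k⟩
              ⟨F, O, insert s I, St, .inner s (G.succ s) :: k⟩
  | innerFound (F O I St s s' rest k) :
      s' ∈ St →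
      NStep G ⟨F, O, I, St, .inner s (s' :: rest) :: k⟩ ⟨F ∪ G.C s', O, I, St, k⟩
  | innerRec (F O I St s s' rest k) :
      s' ∉ St → s' ∉ I → ¬ G.C s' ⊆ F →
      NStep G ⟨F, O, I, St, .inner s (s' :: rest) :: k⟩
              ⟨F, O, I, St, .callInner s' :: .inner s rest :: k⟩
  | innerSkip (F O I St s s' rest k) :
      s' ∉ St → (s' ∈ I ∨ G.C s' ⊆ F) →
      NStep G ⟨F, O, I, St, .inner s (s' :: rest) :: k⟩ ⟨F, O, I, St, .inner s rest :: k⟩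
  | innerDone (F O I St s k) :
      NStep G ⟨F, O, I, St, .inner s [] :: k⟩ ⟨F, O, I, St, k⟩

/-- The initial configuration of the Cumulative NDFS algorithm. -/
def initConfig (G : NGraph S V) : NConfig S V := ⟨∅, ∅, ∅, ∅, [.callOuter G.init]⟩

/-- The edge relation of the graph. -/
def Edge (G : NGraph S V) (s s' : S) : Prop := s' ∈ G.succ s

/-- One edge of a cycle under the valuation `v`: both endpoints carry `v`. -/
def StepUnder (G : NGraph S V) (v : V) (s s' : S) : Prop :=
  s' ∈ G.succ s ∧ v ∈ G.C s ∧ v ∈ G.C s'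

/-- The step from `c` to `c'` backtracks (in `OuterDFS`) from the state `q`. -/
def Backtracks (G : NGraph S V) (q : S) (c c' : NConfig S V) : Prop :=
  NStep G c c' ∧
    ((∃ k, c.ctrl = NFrame.outer q [] :: k ∧ c'.ctrl = k) ∨
     (∃ k, c.ctrl = NFrame.outerPop q :: k))


/-! ### Auxiliary development for Statement 17 -/

/-- `s` is "dealt with" in configuration `c` relative to a set `Done` of
already-backtracked states: done, on the stack, or covered by `Found`. -/
def DdP (G : NGraph S V) (Done : S → Prop) (c : NConfig S V) (s : S) : Prop :=
  Done s ∨ s ∈ c.stack ∨ G.C s ⊆ c.found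

/-- Well-formedness of the control stack.  The `Option S` token records the state of a
`callOuter` frame directly above, which may justify the last processed successor. -/
def WfCtrl (G : NGraph S V) (Done : S → Prop) (c : NConfig S V) :
    List (NFrame S) → Option S → Prop
  | [], _ => True
  | .callOuter s :: k, _ => WfCtrl G Done c k (some s)
  | .outer u rest :: k, j =>
      (∃ pre, G.succ u = pre ++ rest ∧ ∀ s' ∈ pre, DdP G Done c s' ∨ j = some s') ∧
        WfCtrl G Done c k none
  | .outerPop u :: k, _ => (∀ s' ∈ G.succ u, DdP G Done c s') ∧ WfCtrl G Done c k none
  | .callInner _ :: k, _ => WfCtrl G Done c k none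
  | .inner _ _ :: k, _ => WfCtrl G Done c k none

/-- The outer DFS spine of a control stack (top first). -/
def frameStates : List (NFrame S) → List S
  | [] => []
  | .callOuter s :: k => s :: frameStates k
  | .outer s _ :: k => s :: frameStates k
  | .outerPop s :: k => s :: frameStates k
  | .callInner _ :: k => frameStates k
  | .inner _ _ :: k => frameStates k

/-- The main invariant of the Cumulative NDFS machine. -/
def InvC (G : NGraph S V) (Done : S → Prop) (c : NConfig S V) : Prop :=
  WfCtrl G Done c c.ctrl none ∧
  (∀ s ∈ c.outer, Done s ∨ s ∈ c.stack) ∧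
  (∀ s ∈ c.stack, s ∈ frameStates c.ctrl) ∧
  List.Chain' (fun a b => a ∈ G.succ b) (frameStates c.ctrl)

lemma wf_mono {G : NGraph S V} {D1 D2 : S → Prop} {c c' : NConfig S V}
    (hDd : ∀ t, DdP G D1 c t → DdP G D2 c' t) :
    ∀ (k : List (NFrame S)) (j j' : Option S),
      (∀ t, j = some t → DdP G D2 c' t ∨ j' = some t) →
      WfCtrl G D1 c k j → WfCtrl G D2 c' k j' := by
  intro k
  induction k with
  | nil => intro j j' _ _; trivial
  | cons fr k ih =>
    intro j j' htok h
    cases fr with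
    | callOuter s =>
      simp only [WfCtrl] at h ⊢
      exact ih (some s) (some s) (fun t ht => Or.inr ht) h
    | outer u rest =>
      simp only [WfCtrl] at h ⊢
      obtain ⟨⟨pre, hpre, hall⟩, hk⟩ := h
      refine ⟨⟨pre, hpre, fun s' hs' => ?_⟩, ih none none (by simp) hk⟩
      rcases hall s' hs' with h | h
      · exact Or.inl (hDd s' h)
      · exact htok s' h
    | outerPop u =>
      simp only [WfCtrl] at h ⊢
      obtain ⟨hall, hk⟩ := h
      exact ⟨fun s' hs' => hDd s' (hall s' hs'), ih none none (by simp) hk⟩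
    | callInner s =>
      simp only [WfCtrl] at h ⊢
      exact ih none none (by simp) h
    | inner s rest =>
      simp only [WfCtrl] at h ⊢
      exact ih none none (by simp) h

lemma step_facts {G : NGraph S V} {c c' : NConfig S V} (h : NStep G c c') :
    c.found ⊆ c'.found ∧ ∀ s ∈ c.stack, s ∈ c'.stack ∨ Backtracks G s c c' := by
  cases h with
  | callOuter F O I St s k =>
    exact ⟨subset_rfl, fun t ht => Or.inl (Set.mem_insert_of_mem _ ht)⟩
  | outerSkip F O I St s s' rest k hc => exact ⟨subset_rfl, fun t ht => Or.inl ht⟩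
  | outerRec F O I St s s' rest k h1 h2 h3 => exact ⟨subset_rfl, fun t ht => Or.inl ht⟩
  | outerAcc F O I St s k h1 h2 => exact ⟨subset_rfl, fun t ht => Or.inl ht⟩
  | outerDone F O I St s k hc =>
    refine ⟨subset_rfl, fun t ht => ?_⟩
    by_cases hts : t = s
    · subst hts
      exact Or.inr ⟨NStep.outerDone F O I St t k hc, Or.inl ⟨k, rfl, rfl⟩⟩
    · exact Or.inl ⟨ht, hts⟩
  | outerPop F O I St s k =>
    refine ⟨subset_rfl, fun t ht => ?_⟩
    by_cases hts : t = s
    · subst hts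
      exact Or.inr ⟨NStep.outerPop F O I St t k, Or.inr ⟨k, rfl⟩⟩
    · exact Or.inl ⟨ht, hts⟩
  | callInner F O I St s k => exact ⟨subset_rfl, fun t ht => Or.inl ht⟩
  | innerFound F O I St s s' rest k hc =>
    exact ⟨Set.subset_union_left, fun t ht => Or.inl ht⟩
  | innerRec F O I St s s' rest k h1 h2 h3 => exact ⟨subset_rfl, fun t ht => Or.inl ht⟩
  | innerSkip F O I St s s' rest k h1 h2 => exact ⟨subset_rfl, fun t ht => Or.inl ht⟩
  | innerDone F O I St s k => exact ⟨subset_rfl, fun t ht => Or.inl ht⟩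

lemma dd_step {G : NGraph S V} {c c' : NConfig S V} {Done : S → Prop}
    (h : NStep G c c') (s : S) (hd : DdP G Done c s) :
    DdP G (fun t => Done t ∨ Backtracks G t c c') c' s := by
  obtain ⟨hF, hSt⟩ := step_facts h
  rcases hd with hd | hst | hf
  · exact Or.inl (Or.inl hd)
  · rcases hSt s hst with h2 | h2
    · exact Or.inr (Or.inl h2)
    · exact Or.inl (Or.inr h2)
  · exact Or.inr (Or.inr (hf.trans hF))

lemma ddP_mono {G : NGraph S V} {D1 D2 : S → Prop} {c : NConfig S V} {s : S}
    (h : ∀ t, D1 t → D2 t) (hd : DdP G D1 c s) : DdP G D2 c s := by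
  rcases hd with hd | hd | hd
  · exact Or.inl (h s hd)
  · exact Or.inr (Or.inl hd)
  · exact Or.inr (Or.inr hd)

lemma inv_mono {G : NGraph S V} {D1 D2 : S → Prop} {c : NConfig S V}
    (h : ∀ s, D1 s → D2 s) (hI : InvC G D1 c) : InvC G D2 c := by
  obtain ⟨hwf, hout, hsp, hch⟩ := hI
  refine ⟨wf_mono (fun t => ddP_mono h) c.ctrl none none (by simp) hwf,
    fun s hs => ?_, hsp, hch⟩
  rcases hout s hs with h2 | h2
  · exact Or.inl (h s h2)
  · exact Or.inr h2

lemma inv_init (G : NGraph S V) (D : S → Prop) : InvC G D (initConfig G) := by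
  refine ⟨?_, ?_, ?_, ?_⟩ <;>
    simp [initConfig, WfCtrl, frameStates, List.Chain', List.isChain_singleton]

lemma inv_step {G : NGraph S V} {c c' : NConfig S V} {Done : S → Prop}
    (h : NStep G c c') (hI : InvC G Done c) :
    InvC G (fun t => Done t ∨ Backtracks G t c c') c' := by
  obtain ⟨hwf, hout, hsp, hch⟩ := hI
  have hdd : ∀ t, DdP G Done c t →
      DdP G (fun t => Done t ∨ Backtracks G t c c') c' t := dd_step h
  cases h with
  | callOuter F O I St s k =>
    simp only [WfCtrl, InvC, frameStates] at hwf hout hsp hch ⊢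
    refine ⟨⟨⟨[], by simp, by simp⟩, ?_⟩, ?_, ?_, ?_⟩
    · refine wf_mono hdd k (some s) none (fun t ht => ?_) hwf
      cases ht
      exact Or.inl (Or.inr (Or.inl (Set.mem_insert _ _)))
    · intro t ht
      rcases ht with rfl | ht
      · exact Or.inr (Set.mem_insert _ _)
      · rcases hout t ht with h2 | h2
        · exact Or.inl (Or.inl h2)
        · exact Or.inr (Set.mem_insert_of_mem _ h2)
    · intro t ht
      rcases ht with rfl | ht
      · exact List.mem_cons_self
      · exact hsp t ht
    · exact hch
  | outerSkip F O I St s s' rest k hc =>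
    simp only [WfCtrl, InvC, frameStates] at hwf hout hsp hch ⊢
    obtain ⟨⟨pre, hpre, hall⟩, hk⟩ := hwf
    refine ⟨⟨⟨pre ++ [s'], by rw [hpre]; simp, ?_⟩,
      wf_mono hdd k none none (by simp) hk⟩, ?_, hsp, hch⟩
    · intro x hx
      rcases List.mem_append.mp hx with hx | hx
      · rcases hall x hx with h2 | h2
        · exact Or.inl (hdd x h2)
        · simp at h2
      · rw [List.mem_singleton] at hx
        subst hx
        refine Or.inl (hdd x ?_)
        rcases hc with h2 | h2 | h2
        · rcases hout x h2 with h3 | h3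
          · exact Or.inl h3
          · exact Or.inr (Or.inl h3)
        · exact Or.inr (Or.inl h2)
        · exact Or.inr (Or.inr h2)
    · intro t ht
      rcases hout t ht with h2 | h2
      · exact Or.inl (Or.inl h2)
      · exact Or.inr h2
  | outerRec F O I St s s' rest k h1 h2 h3 =>
    simp only [WfCtrl, InvC, frameStates] at hwf hout hsp hch ⊢
    obtain ⟨⟨pre, hpre, hall⟩, hk⟩ := hwf
    refine ⟨⟨⟨pre ++ [s'], by rw [hpre]; simp, ?_⟩,
      wf_mono hdd k none none (by simp) hk⟩, ?_, ?_, ?_⟩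
    · intro x hx
      rcases List.mem_append.mp hx with hx | hx
      · rcases hall x hx with h4 | h4
        · exact Or.inl (hdd x h4)
        · simp at h4
      · rw [List.mem_singleton] at hx
        subst hx
        exact Or.inr rfl
    · intro t ht
      rcases hout t ht with h4 | h4
      · exact Or.inl (Or.inl h4)
      · exact Or.inr h4
    · intro t ht
      exact List.mem_cons_of_mem _ (hsp t ht)
    · rw [List.Chain', List.isChain_cons_cons]
      refine ⟨?_, hch⟩
      rw [hpre]
      exact List.mem_append_right _ List.mem_cons_self
  | outerAcc F O I St s k ha hf =>
    simp only [WfCtrl, InvC, frameStates] at hwf hout hsp hch ⊢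
    obtain ⟨⟨pre, hpre, hall⟩, hk⟩ := hwf
    rw [List.append_nil] at hpre
    refine ⟨⟨fun x hx => ?_, wf_mono hdd k none none (by simp) hk⟩, ?_, hsp, hch⟩
    · rcases hall x (hpre ▸ hx) with h2 | h2
      · exact hdd x h2
      · simp at h2
    · intro t ht
      rcases hout t ht with h2 | h2
      · exact Or.inl (Or.inl h2)
      · exact Or.inr h2
  | outerDone F O I St s k hc =>
    simp only [WfCtrl, InvC, frameStates] at hwf hout hsp hch ⊢
    obtain ⟨-, hk⟩ := hwf
    have hbs : Backtracks G s ⟨F, O, I, St, .outer s [] :: k⟩ ⟨F, O, I, St \ {s}, k⟩ :=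
      ⟨NStep.outerDone F O I St s k hc, Or.inl ⟨k, rfl, rfl⟩⟩
    refine ⟨wf_mono hdd k none none (by simp) hk, ?_, ?_, hch.tail⟩
    · intro t ht
      rcases hout t ht with h2 | h2
      · exact Or.inl (Or.inl h2)
      · by_cases hts : t = s
        · subst hts; exact Or.inl (Or.inr hbs)
        · exact Or.inr ⟨h2, hts⟩
    · intro t ht
      obtain ⟨ht1, ht2⟩ := ht
      rcases List.mem_cons.mp (hsp t ht1) with rfl | h2
      · exact absurd rfl ht2
      · exact h2
  | outerPop F O I St s k =>
    simp only [WfCtrl, InvC, frameStates] at hwf hout hsp hch ⊢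
    obtain ⟨-, hk⟩ := hwf
    have hbs : Backtracks G s ⟨F, O, I, St, .outerPop s :: k⟩ ⟨F, O, I, St \ {s}, k⟩ :=
      ⟨NStep.outerPop F O I St s k, Or.inr ⟨k, rfl⟩⟩
    refine ⟨wf_mono hdd k none none (by simp) hk, ?_, ?_, hch.tail⟩
    · intro t ht
      rcases hout t ht with h2 | h2
      · exact Or.inl (Or.inl h2)
      · by_cases hts : t = s
        · subst hts; exact Or.inl (Or.inr hbs)
        · exact Or.inr ⟨h2, hts⟩
    · intro t ht
      obtain ⟨ht1, ht2⟩ := ht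
      rcases List.mem_cons.mp (hsp t ht1) with rfl | h2
      · exact absurd rfl ht2
      · exact h2
  | callInner F O I St s k =>
    simp only [WfCtrl, InvC, frameStates] at hwf hout hsp hch ⊢
    refine ⟨wf_mono hdd k none none (by simp) hwf, ?_, hsp, hch⟩
    intro t ht
    rcases hout t ht with h2 | h2
    · exact Or.inl (Or.inl h2)
    · exact Or.inr h2
  | innerFound F O I St s s' rest k hc =>
    simp only [WfCtrl, InvC, frameStates] at hwf hout hsp hch ⊢
    refine ⟨wf_mono hdd k none none (by simp) hwf, ?_, hsp, hch⟩
    intro t ht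
    rcases hout t ht with h2 | h2
    · exact Or.inl (Or.inl h2)
    · exact Or.inr h2
  | innerRec F O I St s s' rest k h1 h2 h3 =>
    simp only [WfCtrl, InvC, frameStates] at hwf hout hsp hch ⊢
    refine ⟨wf_mono hdd k none none (by simp) hwf, ?_, hsp, hch⟩
    intro t ht
    rcases hout t ht with h4 | h4
    · exact Or.inl (Or.inl h4)
    · exact Or.inr h4
  | innerSkip F O I St s s' rest k h1 h2 =>
    simp only [WfCtrl, InvC, frameStates] at hwf hout hsp hch ⊢
    refine ⟨wf_mono hdd k none none (by simp) hwf, ?_, hsp, hch⟩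
    intro t ht
    rcases hout t ht with h4 | h4
    · exact Or.inl (Or.inl h4)
    · exact Or.inr h4
  | innerDone F O I St s k =>
    simp only [WfCtrl, InvC, frameStates] at hwf hout hsp hch ⊢
    refine ⟨wf_mono hdd k none none (by simp) hwf, ?_, hsp, hch⟩
    intro t ht
    rcases hout t ht with h4 | h4
    · exact Or.inl (Or.inl h4)
    · exact Or.inr h4

lemma extract_backtrack {G : NGraph S V} {Done : S → Prop} {c c' : NConfig S V} {u : S}
    (hI : InvC G Done c) (hb : Backtracks G u c c') :
    (∀ s' ∈ G.succ u, DdP G Done c s') ∧ ∃ t, frameStates c.ctrl = u :: t := by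
  obtain ⟨hwf, -, -, -⟩ := hI
  rcases hb.2 with ⟨k, hk, -⟩ | ⟨k, hk⟩
  · rw [hk] at hwf
    simp only [WfCtrl] at hwf
    obtain ⟨⟨pre, hpre, hall⟩, -⟩ := hwf
    rw [List.append_nil] at hpre
    refine ⟨fun s' hs' => ?_, by rw [hk]; exact ⟨_, rfl⟩⟩
    rcases hall s' (hpre ▸ hs') with h | h
    · exact h
    · simp at h
  · rw [hk] at hwf
    simp only [WfCtrl] at hwf
    exact ⟨hwf.1, by rw [hk]; exact ⟨_, rfl⟩⟩

lemma chain_reaches {G : NGraph S V} :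
    ∀ (l : List S) (x : S), List.Chain' (fun a b => a ∈ G.succ b) (x :: l) →
      ∀ u ∈ x :: l, ReflTransGen (Edge G) u x := by
  intro l
  induction l with
  | nil =>
    intro x _ u hu
    rw [List.mem_singleton] at hu
    subst hu
    exact ReflTransGen.refl
  | cons y t ih =>
    intro x hch u hu
    rw [List.Chain', List.isChain_cons_cons] at hch
    rcases List.mem_cons.mp hu with rfl | hu
    · exact ReflTransGen.refl
    · exact (ih y hch.2 u hu).tail hch.1

lemma reach_C_mono {G : NGraph S V} {a b : S} (h : ReflTransGen (Edge G) a b) :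
    G.C b ⊆ G.C a := by
  induction h with
  | refl => exact subset_rfl
  | tail h e ih => exact (G.mono _ _ e).trans ih

lemma under_of_refl {G : NGraph S V} {v : V} {a b : S} (h : ReflTransGen (Edge G) a b) :
    v ∈ G.C b → ReflTransGen (StepUnder G v) a b := by
  induction h with
  | refl => intro _; exact ReflTransGen.refl
  | @tail c d h e ih =>
    intro hv
    have hvc : v ∈ G.C c := G.mono c d e hv
    exact (ih hvc).tail ⟨e, hvc, hv⟩

lemma under_of_trans {G : NGraph S V} {v : V} {a b : S} (h : TransGen (Edge G) a b) :
    v ∈ G.C b → TransGen (StepUnder G v) a b := by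
  induction h with
  | single e => intro hv; exact TransGen.single ⟨e, G.mono _ _ e hv, hv⟩
  | @tail c d h e ih =>
    intro hv
    have hvc : v ∈ G.C c := G.mono c d e hv
    exact (ih hvc).tail ⟨e, hvc, hv⟩

/-- The set of states backtracked from strictly before step `i`. -/
def DoneAt (G : NGraph S V) (f : ℕ → NConfig S V) (i : ℕ) (s : S) : Prop :=
  ∃ j, j < i ∧ Backtracks G s (f j) (f (j + 1))

lemma inv_run {G : NGraph S V} {f : ℕ → NConfig S V} {m : ℕ}
    (h0 : f 0 = initConfig G) (hsteps : ∀ i, i ≤ m → NStep G (f i) (f (i + 1))) :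
    ∀ i, i ≤ m + 1 → InvC G (DoneAt G f i) (f i) := by
  intro i
  induction i with
  | zero =>
    intro _
    rw [h0]
    exact inv_init G _
  | succ i ih =>
    intro hi
    have h1 := ih (Nat.le_of_succ_le hi)
    have hs := hsteps i (Nat.lt_succ_iff.mp hi)
    refine inv_mono (fun s h => ?_) (inv_step hs h1)
    rcases h with ⟨j, hj, hb⟩ | hb
    · exact ⟨j, Nat.lt_succ_of_lt hj, hb⟩
    · exact ⟨i, Nat.lt_succ_self i, hb⟩

lemma dd_run {G : NGraph S V} {f : ℕ → NConfig S V} {m : ℕ}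
    (hsteps : ∀ i, i ≤ m → NStep G (f i) (f (i + 1))) {s : S} :
    ∀ i j, i ≤ j → j ≤ m + 1 → DdP G (DoneAt G f i) (f i) s →
      DdP G (DoneAt G f j) (f j) s := by
  intro i j hij
  induction j, hij using Nat.le_induction with
  | base => exact fun _ => id
  | succ j hij ih =>
    intro hjm hd
    have h1 := ih (by omega) hd
    have hs := hsteps j (by omega)
    refine ddP_mono (fun t ht => ?_) (dd_step hs s h1)
    rcases ht with ⟨l, hl, hb⟩ | hb
    · exact ⟨l, Nat.lt_succ_of_lt hl, hb⟩
    · exact ⟨j, Nat.lt_succ_self j, hb⟩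

/-- If `q` does not appear on any cycle under `v`, then `OuterDFS`
backtracks from `q` only after every state `s` reachable from `q` with `v ∈ s.⟦C⟧`
has already been backtracked from or satisfies `s.⟦C⟧ ⊆ Found`. -/
theorem backtrack_order_of_noncyclic_states
    (G : NGraph S V) (v : V) (q : S)
    (hq : ¬ TransGen (StepUnder G v) q q)
    (f : ℕ → NConfig S V) (m : ℕ) (h0 : f 0 = initConfig G)
    (hsteps : ∀ i, i ≤ m → NStep G (f i) (f (i + 1)))
    (hback : Backtracks G q (f m) (f (m + 1))) :
    ∀ s : S, TransGen (Edge G) q s → v ∈ G.C s →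
      (∃ j, j < m ∧ Backtracks G s (f j) (f (j + 1))) ∨ G.C s ⊆ (f m).found := by
  have hInv : ∀ i, i ≤ m + 1 → InvC G (DoneAt G f i) (f i) := inv_run h0 hsteps
  -- Every successor of a state backtracked at step `j ≤ m` is dealt with at time `m`.
  have key : ∀ u j, j ≤ m → Backtracks G u (f j) (f (j + 1)) →
      ∀ t ∈ G.succ u, DdP G (DoneAt G f m) (f m) t := by
    intro u j hj hb t ht
    have h1 := (extract_backtrack (hInv j (by omega)) hb).1 t ht
    exact dd_run hsteps j m hj (by omega) h1
  -- No state reachable from `q` and carrying `v` can be on the stack at time `m`.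
  have hnostack : ∀ t, TransGen (Edge G) q t → v ∈ G.C t → t ∉ (f m).stack := by
    intro t hr hvt hst
    obtain ⟨-, kk, hhead⟩ := extract_backtrack (hInv m (by omega)) hback
    obtain ⟨-, -, hsp, hch⟩ := hInv m (by omega)
    have hmem : t ∈ frameStates (f m).ctrl := hsp t hst
    rw [hhead] at hmem hch
    have hreachq : ReflTransGen (Edge G) t q := chain_reaches kk q hch t hmem
    have hvq : v ∈ G.C q := reach_C_mono hr.to_reflTransGen hvt
    exact hq ((under_of_trans hr hvt).trans_left (under_of_refl hreachq hvq))
  intro s hreach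
  induction hreach with
  | @single t e =>
    intro hv
    rcases key q m le_rfl hback t e with h | h | h
    · exact Or.inl h
    · exact absurd h (hnostack t (TransGen.single e) hv)
    · exact Or.inr h
  | @tail u t hqu e ih =>
    intro hv
    have hvu : v ∈ G.C u := G.mono u t e hv
    rcases ih hvu with h | h
    · obtain ⟨j, hj, hb⟩ := h
      rcases key u j (Nat.le_of_lt hj) hb t e with h2 | h2 | h2
      · exact Or.inl h2
      · exact absurd h2 (hnostack t (hqu.tail e) hv)
      · exact Or.inr h2
    · exact Or.inr ((G.mono u t e).trans h)

end PTASynth
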